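/- Let h: ℝ^d → ℂ be almost periodic, bounded by C, nowhere zero, h(0)=1, and suppose (t_{n_k}) is such that h(t_{n_k}+·) converges uniformly to φ with φ(τ)φ(−τ) = 0 for all τ. Then sup_{τ} |h(t_{n_k}+τ) h(t_{n_k}−τ)| → 0, and for every fixed s ∈ ℝ^d, h(2 t_{n_k} + s) → 0. -/

import Mathlib

open Filter

/-- A function is almost periodic if every sequence of translates has a
subsequence converging uniformly to a continuous function. -/
def AlmostPeriodic {d : ℕ} (h : EuclideanSpace ℝ (Fin d) → ℂ) : Prop :=
  ∀ s : ℕ → EuclideanSpace ℝ (Fin d),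
    ∃ (k : ℕ → ℕ) (φ : EuclideanSpace ℝ (Fin d) → ℂ), StrictMono k ∧ Continuous φ ∧
      TendstoUniformly (fun n t => h (t + s (k n))) φ atTop

/-- If the translates `h(t_k + ·)` converge uniformly to `φ` with
`φ(τ)φ(−τ) ≡ 0`, then `sup_τ |h(t_k+τ)h(t_k−τ)| → 0`, and for every fixed `s`,
`h(2t_k + s) → 0`. -/
theorem stmt11 (d : ℕ) (h : EuclideanSpace ℝ (Fin d) → ℂ) (C : ℝ)
    (hcont : Continuous h) (hap : AlmostPeriodic h)
    (hC : ∀ t, ‖h t‖ ≤ C) (hne : ∀ t, h t ≠ 0) (h0 : h 0 = 1)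
    (t : ℕ → EuclideanSpace ℝ (Fin d)) (φ : EuclideanSpace ℝ (Fin d) → ℂ)
    (hφc : Continuous φ)
    (hunif : TendstoUniformly (fun k τ => h (t k + τ)) φ atTop)
    (hφ0 : ∀ τ, φ τ * φ (-τ) = 0) :
    TendstoUniformly (fun k τ => h (t k + τ) * h (t k - τ)) 0 atTop ∧
    ∀ s : EuclideanSpace ℝ (Fin d),
      Tendsto (fun k => h ((2 : ℝ) • t k + s)) atTop (nhds 0) := by
  have hC1 : (1 : ℝ) ≤ C := by simpa [h0] using hC 0
  have hCpos : (0 : ℝ) < C := lt_of_lt_of_le one_pos hC1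
  have hφC : ∀ τ, ‖φ τ‖ ≤ C := by
    intro τ
    have hpt : Tendsto (fun k => h (t k + τ)) atTop (nhds (φ τ)) := hunif.tendsto_at τ
    exact le_of_tendsto hpt.norm (Eventually.of_forall fun k => hC _)
  have main : TendstoUniformly (fun k τ => h (t k + τ) * h (t k - τ)) 0 atTop := by
    rw [Metric.tendstoUniformly_iff] at hunif ⊢
    intro ε hε
    have hε' : 0 < ε / (4 * C) := by positivity
    filter_upwards [hunif _ hε'] with k hk τ
    have h1 := hk τ
    have h2 := hk (-τ)
    rw [dist_comm, dist_eq_norm] at h1 h2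
    have key : h (t k + τ) * h (t k - τ)
        = (h (t k + τ) - φ τ) * h (t k - τ) + φ τ * (h (t k + -τ) - φ (-τ))
          + φ τ * φ (-τ) := by
      have hs : t k - τ = t k + -τ := sub_eq_add_neg _ _
      rw [hs]; ring
    have hnorm : ‖h (t k + τ) * h (t k - τ)‖ < ε := by
      rw [key, hφ0, add_zero]
      calc ‖(h (t k + τ) - φ τ) * h (t k - τ) + φ τ * (h (t k + -τ) - φ (-τ))‖
          ≤ ‖(h (t k + τ) - φ τ) * h (t k - τ)‖ + ‖φ τ * (h (t k + -τ) - φ (-τ))‖ :=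
            norm_add_le _ _
        _ = ‖h (t k + τ) - φ τ‖ * ‖h (t k - τ)‖ + ‖φ τ‖ * ‖h (t k + -τ) - φ (-τ)‖ := by
            rw [norm_mul, norm_mul]
        _ ≤ (ε / (4 * C)) * C + C * (ε / (4 * C)) := by
            have a1 : ‖h (t k + τ) - φ τ‖ * ‖h (t k - τ)‖ ≤ (ε / (4 * C)) * C :=
              mul_le_mul h1.le (hC _) (norm_nonneg _) (by positivity)
            have a2 : ‖φ τ‖ * ‖h (t k + -τ) - φ (-τ)‖ ≤ C * (ε / (4 * C)) :=
              mul_le_mul (hφC _) h2.le (norm_nonneg _) hCpos.le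
            linarith
        _ = ε / 2 := by field_simp; ring
        _ < ε := by linarith
    simpa [dist_zero_left] using hnorm
  refine ⟨main, fun s => ?_⟩
  rw [Metric.tendstoUniformly_iff] at main
  have hns : 0 < ‖h (-s)‖ := norm_pos_iff.mpr (hne _)
  rw [Metric.tendsto_atTop]
  intro ε hε
  have := main (ε * ‖h (-s)‖) (by positivity)
  rw [eventually_atTop] at this
  obtain ⟨N, hN⟩ := this
  refine ⟨N, fun k hk => ?_⟩
  have hτ := hN k hk (t k + s)
  have e1 : t k + (t k + s) = (2 : ℝ) • t k + s := by
    rw [two_smul]; abel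
  have e2 : t k - (t k + s) = -s := by abel
  rw [e1, e2] at hτ
  simp only [Pi.zero_apply, dist_zero_left, norm_mul] at hτ
  rw [dist_eq_norm, sub_zero]
  exact lt_of_mul_lt_mul_right hτ hns.le
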